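/- For weights u, v on ℝ and intervals, define the joint constant [u,v]_{A_2} = sup_J ⟨u⟩_J⟨v^{-1}⟩_J. If w ∈ A_2, k ∈ ℤ, and u = Σ_{I∈𝒫_k}⟨w^{-1}⟩_I χ_I (averaging of w^{-1}) and v = (Σ_{I∈𝒫′_k}⟨w⟩_I χ_I)^{-1} for two (possibly different) translated dyadic partitions 𝒫_k, 𝒫′_k of scale 2^{-k}, then [u, v]_{A_2}^{1/2}([u]_{A_2}^{1/2} + [v]_{A_2}^{1/2}) ≤ c[w]_{A_2} for an absolute constant c. -/

import Mathlib

open MeasureTheory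

/-- The interval of the translated dyadic grid with offset `α`, scale `2^{-k}`, index `j`. -/
def gridInterval (α : ℝ) (k : ℤ) (j : ℤ) : Set ℝ :=
  Set.Ico (α + (j : ℝ) * (2 : ℝ) ^ (-k)) (α + ((j : ℝ) + 1) * (2 : ℝ) ^ (-k))

/-- The averaging of `w` over the translated dyadic grid with offset `α` at scale `2^{-k}`. -/
noncomputable def gridAvg (w : ℝ → ℝ) (α : ℝ) (k : ℤ) (x : ℝ) : ℝ :=
  ((2 : ℝ) ^ (-k))⁻¹ *
    ∫ t in gridInterval α k ⌊(x - α) / (2 : ℝ) ^ (-k)⌋, w t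

/-- The average of `f` over the bounded interval `(a, b]`. -/
noncomputable def intervalAvg (f : ℝ → ℝ) (a b : ℝ) : ℝ :=
  (b - a)⁻¹ * ∫ x in Set.Ioc a b, f x

/-- The `A₂` constant `[x]_{A₂} = sup_J ⟨x⟩_J ⟨x⁻¹⟩_J` over bounded intervals `J`. -/
noncomputable def A2const (x : ℝ → ℝ) : ℝ :=
  sSup {c : ℝ | ∃ a b : ℝ, a < b ∧
    c = intervalAvg x a b * intervalAvg (fun y => (x y)⁻¹) a b}

/-- The joint two-weight constant `[u,v]_{A₂} = sup_J ⟨u⟩_J ⟨v⁻¹⟩_J`. -/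
noncomputable def jointA2const (u v : ℝ → ℝ) : ℝ :=
  sSup {c : ℝ | ∃ a b : ℝ, a < b ∧
    c = intervalAvg u a b * intervalAvg (fun y => (v y)⁻¹) a b}

open Set



lemma hpow (k : ℤ) : (0:ℝ) < (2:ℝ) ^ (-k) := zpow_pos two_pos _

lemma mem_grid (α : ℝ) (k : ℤ) (x : ℝ) :
    x ∈ gridInterval α k ⌊(x - α) / (2:ℝ) ^ (-k)⌋ := by
  have h := hpow k
  constructor
  · have := Int.floor_le ((x - α) / (2:ℝ) ^ (-k))
    rw [le_div_iff₀ h] at this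
    linarith
  · have := Int.lt_floor_add_one ((x - α) / (2:ℝ) ^ (-k))
    rw [div_lt_iff₀ h] at this
    push_cast
    linarith

lemma floor_eq_of_mem {α : ℝ} {k j : ℤ} {x : ℝ} (hx : x ∈ gridInterval α k j) :
    ⌊(x - α) / (2:ℝ) ^ (-k)⌋ = j := by
  have h := hpow k
  obtain ⟨h1, h2⟩ := hx
  rw [Int.floor_eq_iff]
  constructor
  · rw [le_div_iff₀ h]; linarith
  · rw [div_lt_iff₀ h]; push_cast; linarith

lemma gridAvg_eq_on {α : ℝ} {k j : ℤ} {x : ℝ} (f : ℝ → ℝ) (hx : x ∈ gridInterval α k j) :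
    gridAvg f α k x = ((2:ℝ) ^ (-k))⁻¹ * ∫ t in gridInterval α k j, f t := by
  rw [gridAvg, floor_eq_of_mem hx]
lemma intOnIcc {f : ℝ → ℝ} (hloc : LocallyIntegrable f volume) (p q : ℝ) :
    IntegrableOn f (Set.Icc p q) volume :=
  hloc.integrableOn_isCompact isCompact_Icc

lemma intOnIoc {f : ℝ → ℝ} (hloc : LocallyIntegrable f volume) (p q : ℝ) :
    IntegrableOn f (Set.Ioc p q) volume :=
  (intOnIcc hloc p q).mono_set Set.Ioc_subset_Icc_self

lemma intOnGrid {f : ℝ → ℝ} (hloc : LocallyIntegrable f volume) (α : ℝ) (k j : ℤ) :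
    IntegrableOn f (gridInterval α k j) volume :=
  (intOnIcc hloc _ _).mono_set Set.Ico_subset_Icc_self

lemma gridAvg_nonneg {f : ℝ → ℝ} (hf0 : ∀ x, 0 ≤ f x) (α : ℝ) (k : ℤ) (x : ℝ) :
    0 ≤ gridAvg f α k x :=
  mul_nonneg (inv_nonneg.2 (hpow k).le)
    (setIntegral_nonneg measurableSet_Ico fun y _ => hf0 y)

lemma grid_subset {α : ℝ} {k j : ℤ} {x p q : ℝ} (hx : x ∈ gridInterval α k j)
    (hpx : p ≤ x) (hxq : x ≤ q) :
    gridInterval α k j ⊆ Set.Ioc (p - (2:ℝ) ^ (-k)) (q + (2:ℝ) ^ (-k)) := by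
  obtain ⟨h1, h2⟩ := hx
  intro y ⟨hy1, hy2⟩
  constructor
  · push_cast at h2 hy2 ⊢
    nlinarith [hpow k]
  · push_cast at h2 hy2 ⊢
    nlinarith [hpow k]

lemma gridAvg_le_bound {f : ℝ → ℝ} (hf0 : ∀ x, 0 ≤ f x)
    (hloc : LocallyIntegrable f volume) (α : ℝ) (k : ℤ) {p q x : ℝ}
    (hpx : p ≤ x) (hxq : x ≤ q) :
    gridAvg f α k x ≤ ((2:ℝ) ^ (-k))⁻¹ *
      ∫ t in Set.Ioc (p - (2:ℝ) ^ (-k)) (q + (2:ℝ) ^ (-k)), f t := by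
  rw [gridAvg]
  refine mul_le_mul_of_nonneg_left ?_ (inv_nonneg.2 (hpow k).le)
  exact setIntegral_mono_set (intOnIoc hloc _ _)
    (Filter.Eventually.of_forall fun y => hf0 y)
    (HasSubset.Subset.eventuallyLE (grid_subset (mem_grid α k x) hpx hxq))

lemma gridAvg_measurable {f : ℝ → ℝ} (α : ℝ) (k : ℤ) :
    Measurable (gridAvg f α k) := by
  have : gridAvg f α k = (fun j : ℤ => ((2:ℝ) ^ (-k))⁻¹ * ∫ t in gridInterval α k j, f t) ∘
      (fun x : ℝ => ⌊(x - α) / (2:ℝ) ^ (-k)⌋) := rfl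
  rw [this]
  exact (measurable_from_top).comp
    (Int.measurable_floor.comp ((measurable_id.sub_const α).div_const _))

lemma gridAvg_integrableOn {f : ℝ → ℝ} (hf0 : ∀ x, 0 ≤ f x)
    (hloc : LocallyIntegrable f volume) (α : ℝ) (k : ℤ) (p q : ℝ) :
    IntegrableOn (gridAvg f α k) (Set.Icc p q) volume := by
  set C := ((2:ℝ) ^ (-k))⁻¹ *
      ∫ t in Set.Ioc (p - (2:ℝ) ^ (-k)) (q + (2:ℝ) ^ (-k)), f t with hC
  refine Integrable.mono' (g := fun _ => C)
    (integrableOn_const measure_Icc_lt_top.ne)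
    ((gridAvg_measurable α k).aestronglyMeasurable.restrict) ?_
  rw [ae_restrict_iff' measurableSet_Icc]
  refine Filter.Eventually.of_forall fun x hx => ?_
  rw [Real.norm_eq_abs, abs_of_nonneg (gridAvg_nonneg hf0 α k x)]
  exact gridAvg_le_bound hf0 hloc α k hx.1 hx.2
lemma sum_eq {f : ℝ → ℝ} (hf0 : ∀ x, 0 ≤ f x)
    (hloc : LocallyIntegrable f volume) (α : ℝ) (k : ℤ) (j : ℤ) (n : ℕ) :
    ∫ x in Set.Ico (α + (j:ℝ) * (2:ℝ)^(-k)) (α + ((j:ℝ) + (n:ℝ)) * (2:ℝ)^(-k)),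
        gridAvg f α k x
      = ∫ x in Set.Ico (α + (j:ℝ) * (2:ℝ)^(-k)) (α + ((j:ℝ) + (n:ℝ)) * (2:ℝ)^(-k)), f x := by
  induction n with
  | zero => norm_num
  | succ n ih =>
      have h := hpow k
      have hle1 : α + (j:ℝ) * (2:ℝ)^(-k) ≤ α + ((j:ℝ) + (n:ℝ)) * (2:ℝ)^(-k) := by
        nlinarith [Nat.cast_nonneg (α := ℝ) n]
      have hle2 : α + ((j:ℝ) + (n:ℝ)) * (2:ℝ)^(-k)
          ≤ α + ((j:ℝ) + ((n:ℕ):ℝ) + 1) * (2:ℝ)^(-k) := by nlinarith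
      have hsplit : Set.Ico (α + (j:ℝ) * (2:ℝ)^(-k)) (α + ((j:ℝ) + (((n:ℕ)+1:ℕ)):ℝ) * (2:ℝ)^(-k))
          = Set.Ico (α + (j:ℝ) * (2:ℝ)^(-k)) (α + ((j:ℝ) + (n:ℝ)) * (2:ℝ)^(-k)) ∪
            Set.Ico (α + ((j:ℝ) + (n:ℝ)) * (2:ℝ)^(-k)) (α + ((j:ℝ) + (n:ℝ) + 1) * (2:ℝ)^(-k)) := by
        rw [Set.Ico_union_Ico_eq_Ico hle1 (by push_cast; nlinarith)]
        push_cast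
        ring_nf
      have hgridset : Set.Ico (α + ((j:ℝ) + (n:ℝ)) * (2:ℝ)^(-k))
            (α + ((j:ℝ) + (n:ℝ) + 1) * (2:ℝ)^(-k)) = gridInterval α k (j + n) := by
        rw [gridInterval]; push_cast; ring_nf
      have hlast : ∫ x in Set.Ico (α + ((j:ℝ) + (n:ℝ)) * (2:ℝ)^(-k))
            (α + ((j:ℝ) + (n:ℝ) + 1) * (2:ℝ)^(-k)), gridAvg f α k x
          = ∫ x in Set.Ico (α + ((j:ℝ) + (n:ℝ)) * (2:ℝ)^(-k))
            (α + ((j:ℝ) + (n:ℝ) + 1) * (2:ℝ)^(-k)), f x := by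
        rw [hgridset]
        have hconst : ∀ x ∈ gridInterval α k (j + n),
            gridAvg f α k x = ((2:ℝ)^(-k))⁻¹ * ∫ t in gridInterval α k (j + n), f t :=
          fun x hx => gridAvg_eq_on f hx
        rw [setIntegral_congr_fun (by rw [gridInterval]; exact measurableSet_Ico) hconst, setIntegral_const]
        rw [gridInterval, measureReal_def, Real.volume_Ico]
        have harith : α + ((((j + (n:ℤ)):ℤ):ℝ) + 1) * (2:ℝ)^(-k)
            - (α + (((j + (n:ℤ)):ℤ):ℝ) * (2:ℝ)^(-k)) = (2:ℝ)^(-k) := by ring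
        rw [harith, ENNReal.toReal_ofReal (hpow k).le, smul_eq_mul, ← mul_assoc,
          mul_inv_cancel₀ (hpow k).ne', one_mul]
      have hdisj : Disjoint (Set.Ico (α + (j:ℝ) * (2:ℝ)^(-k)) (α + ((j:ℝ) + (n:ℝ)) * (2:ℝ)^(-k)))
          (Set.Ico (α + ((j:ℝ) + (n:ℝ)) * (2:ℝ)^(-k)) (α + ((j:ℝ) + (n:ℝ) + 1) * (2:ℝ)^(-k))) :=
        Set.Ico_disjoint_Ico_same
      have hig : IntegrableOn (gridAvg f α k) _ volume :=
        (gridAvg_integrableOn hf0 hloc α k (α + (j:ℝ) * (2:ℝ)^(-k))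
          (α + ((j:ℝ) + (n:ℝ)) * (2:ℝ)^(-k))).mono_set Set.Ico_subset_Icc_self
      have hig2 : IntegrableOn (gridAvg f α k) _ volume :=
        (gridAvg_integrableOn hf0 hloc α k (α + ((j:ℝ) + (n:ℝ)) * (2:ℝ)^(-k))
          (α + ((j:ℝ) + (n:ℝ) + 1) * (2:ℝ)^(-k))).mono_set Set.Ico_subset_Icc_self
      have hif : IntegrableOn f _ volume :=
        (intOnIcc hloc (α + (j:ℝ) * (2:ℝ)^(-k))
          (α + ((j:ℝ) + (n:ℝ)) * (2:ℝ)^(-k))).mono_set Set.Ico_subset_Icc_self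
      have hif2 : IntegrableOn f _ volume :=
        (intOnIcc hloc (α + ((j:ℝ) + (n:ℝ)) * (2:ℝ)^(-k))
          (α + ((j:ℝ) + (n:ℝ) + 1) * (2:ℝ)^(-k))).mono_set Set.Ico_subset_Icc_self
      rw [hsplit, setIntegral_union hdisj measurableSet_Ico hig hig2,
        setIntegral_union hdisj measurableSet_Ico hif hif2, ih, hlast]
lemma intervalAvg_nonneg {f : ℝ → ℝ} (hf0 : ∀ x, 0 ≤ f x) {a b : ℝ} (hab : a < b) :
    0 ≤ intervalAvg f a b :=
  mul_nonneg (inv_nonneg.2 (by linarith)) (setIntegral_nonneg measurableSet_Ioc fun y _ => hf0 y)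

lemma avg_le {f : ℝ → ℝ} (hf0 : ∀ x, 0 ≤ f x)
    (hloc : LocallyIntegrable f volume) (α : ℝ) (k : ℤ) {a b : ℝ} (hab : a < b) :
    intervalAvg (gridAvg f α k) a b
      ≤ 3 * intervalAvg f (a - (2:ℝ)^(-k)) (b + (2:ℝ)^(-k)) := by
  set h : ℝ := (2:ℝ)^(-k) with hh
  have hpos := hpow k
  rw [← hh] at hpos
  set S : ℝ := ∫ t in Set.Ioc (a - h) (b + h), f t with hS
  have hS0 : 0 ≤ S := setIntegral_nonneg measurableSet_Ioc fun y _ => hf0 y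
  have hrhs : 3 * intervalAvg f (a - h) (b + h) = 3 * (b + h - (a - h))⁻¹ * S := by
    rw [intervalAvg]; ring
  rw [hrhs, intervalAvg]
  have hba : 0 < b - a := by linarith
  rcases le_or_gt (b - a) h with hc | hc
  · -- small interval case: pointwise bound
    have hpt : ∀ x ∈ Set.Ioc a b, gridAvg f α k x ≤ h⁻¹ * S := by
      intro x hx
      exact gridAvg_le_bound hf0 hloc α k hx.1.le hx.2
    have hint : ∫ x in Set.Ioc a b, gridAvg f α k x ≤ ∫ _ in Set.Ioc a b, h⁻¹ * S := by
      refine setIntegral_mono_on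
        ((gridAvg_integrableOn hf0 hloc α k a b).mono_set Set.Ioc_subset_Icc_self)
        (integrableOn_const measure_Ioc_lt_top.ne) measurableSet_Ioc hpt
    rw [setIntegral_const, measureReal_def, Real.volume_Ioc, ENNReal.toReal_ofReal hba.le, smul_eq_mul] at hint
    calc (b - a)⁻¹ * ∫ x in Set.Ioc a b, gridAvg f α k x
        ≤ (b - a)⁻¹ * ((b - a) * (h⁻¹ * S)) :=
          mul_le_mul_of_nonneg_left hint (inv_nonneg.2 hba.le)
      _ = h⁻¹ * S := by field_simp
      _ ≤ 3 * (b + h - (a - h))⁻¹ * S := by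
          refine mul_le_mul_of_nonneg_right ?_ hS0
          rw [show (3:ℝ) * (b + h - (a - h))⁻¹ = 3 / (b + h - (a - h)) by ring,
            show h⁻¹ = 3 / (3 * h) by field_simp, div_le_div_iff₀ (by linarith) (by linarith)]
          nlinarith
  · -- large interval case
    set j0 : ℤ := ⌊(a - α) / h⌋ with hj0
    set j1 : ℤ := ⌊(b - α) / h⌋ with hj1
    have hj01 : j0 ≤ j1 := Int.floor_le_floor (by gcongr <;> linarith)
    set n : ℕ := (j1 + 1 - j0).toNat with hn
    have hnn : (j0 : ℝ) + (n : ℝ) = (j1 : ℝ) + 1 := by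
      have : ((j1 + 1 - j0).toNat : ℤ) = j1 + 1 - j0 := Int.toNat_of_nonneg (by omega)
      have := congrArg (fun z : ℤ => (z : ℝ)) this
      push_cast at this
      linarith
    have hL1 : α + (j0:ℝ) * h ≤ a := by
      have := Int.floor_le ((a - α) / h)
      rw [le_div_iff₀ hpos] at this
      linarith
    have hL2 : a - h < α + (j0:ℝ) * h := by
      have := Int.lt_floor_add_one ((a - α) / h)
      rw [div_lt_iff₀ hpos] at this
      push_cast at this
      nlinarith
    have hR1 : b < α + ((j1:ℝ) + 1) * h := by
      have := Int.lt_floor_add_one ((b - α) / h)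
      rw [div_lt_iff₀ hpos] at this
      push_cast at this
      nlinarith
    have hR2 : α + ((j1:ℝ) + 1) * h ≤ b + h := by
      have := Int.floor_le ((b - α) / h)
      rw [le_div_iff₀ hpos] at this
      nlinarith
    have hsub1 : Set.Ioc a b ⊆ Set.Ico (α + (j0:ℝ) * h) (α + ((j0:ℝ) + (n:ℝ)) * h) := by
      intro x hx
      rw [hnn] at *
      exact ⟨by linarith [hx.1], by linarith [hx.2]⟩
    have hsub2 : Set.Ico (α + (j0:ℝ) * h) (α + ((j0:ℝ) + (n:ℝ)) * h)
        ⊆ Set.Ioc (a - h) (b + h) := by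
      intro y hy
      rw [hnn] at hy
      exact ⟨by linarith [hy.1], by linarith [hy.2]⟩
    have step1 : ∫ x in Set.Ioc a b, gridAvg f α k x
        ≤ ∫ x in Set.Ico (α + (j0:ℝ) * h) (α + ((j0:ℝ) + (n:ℝ)) * h), gridAvg f α k x := by
      refine setIntegral_mono_set
        ((gridAvg_integrableOn hf0 hloc α k _ _).mono_set Set.Ico_subset_Icc_self)
        (Filter.Eventually.of_forall fun y => gridAvg_nonneg hf0 α k y)
        (HasSubset.Subset.eventuallyLE hsub1)
    have step2 : ∫ x in Set.Ico (α + (j0:ℝ) * h) (α + ((j0:ℝ) + (n:ℝ)) * h), gridAvg f α k x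
        = ∫ x in Set.Ico (α + (j0:ℝ) * h) (α + ((j0:ℝ) + (n:ℝ)) * h), f x :=
      sum_eq hf0 hloc α k j0 n
    have step3 : ∫ x in Set.Ico (α + (j0:ℝ) * h) (α + ((j0:ℝ) + (n:ℝ)) * h), f x ≤ S := by
      refine setIntegral_mono_set (intOnIoc hloc _ _)
        (Filter.Eventually.of_forall fun y => hf0 y)
        (HasSubset.Subset.eventuallyLE hsub2)
    have hchain : ∫ x in Set.Ioc a b, gridAvg f α k x ≤ S := by
      rw [step2] at step1; linarith
    calc (b - a)⁻¹ * ∫ x in Set.Ioc a b, gridAvg f α k x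
        ≤ (b - a)⁻¹ * S := mul_le_mul_of_nonneg_left hchain (inv_nonneg.2 hba.le)
      _ ≤ 3 * (b + h - (a - h))⁻¹ * S := by
          refine mul_le_mul_of_nonneg_right ?_ hS0
          rw [show (3:ℝ) * (b + h - (a - h))⁻¹ = 3 / (b + h - (a - h)) by ring,
            inv_eq_one_div, div_le_div_iff₀ hba (by linarith)]
          nlinarith
lemma two_le_add_inv {a b : ℝ} (ha : 0 < a) (hb : 0 < b) :
    2 ≤ a * b⁻¹ + a⁻¹ * b := by
  have h2 : (a * b⁻¹ + a⁻¹ * b) * (a * b) = a * a + b * b := by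
    rw [add_mul,
      show a * b⁻¹ * (a * b) = a * a * (b * b⁻¹) by ring,
      show a⁻¹ * b * (a * b) = b * b * (a * a⁻¹) by ring,
      mul_inv_cancel₀ hb.ne', mul_inv_cancel₀ ha.ne', mul_one, mul_one]
  nlinarith [sq_nonneg (a - b), mul_pos ha hb]

lemma cs_grid {w : ℝ → ℝ} (hw0 : ∀ x, 0 < w x)
    (hl1 : LocallyIntegrable w volume)
    (hl2 : LocallyIntegrable (fun x => (w x)⁻¹) volume)
    (α : ℝ) (k : ℤ) (x : ℝ) :
    (gridAvg (fun x => (w x)⁻¹) α k x)⁻¹ ≤ gridAvg w α k x := by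
  set h : ℝ := (2:ℝ)^(-k) with hh
  have hpos := hpow k
  rw [← hh] at hpos
  set j : ℤ := ⌊(x - α) / h⌋
  set I : Set ℝ := gridInterval α k j with hI
  have hImeas : MeasurableSet I := by rw [hI, gridInterval]; exact measurableSet_Ico
  have hIvol : volume I = ENNReal.ofReal h := by
    rw [hI, gridInterval, Real.volume_Ico]
    congr 1
    ring
  have hiw : IntegrableOn w I volume := intOnGrid hl1 α k j
  have hiv : IntegrableOn (fun x => (w x)⁻¹) I volume := intOnGrid hl2 α k j
  set A : ℝ := ∫ t in I, (w t)⁻¹ with hA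
  set B : ℝ := ∫ t in I, w t with hB
  have hA0 : 0 < A := by
    rw [hA, setIntegral_pos_iff_support_of_nonneg_ae
      (Filter.Eventually.of_forall fun y => (inv_pos.2 (hw0 y)).le) hiv]
    have hsupp : Function.support (fun x => (w x)⁻¹) = Set.univ := by
      ext y
      simp only [Function.support, ne_eq, inv_eq_zero, Set.mem_setOf_eq, Set.mem_univ, iff_true]
      exact (hw0 y).ne'
    rw [hsupp, Set.univ_inter, hIvol]
    exact ENNReal.ofReal_pos.2 hpos
  -- Cauchy-Schwarz: h * h ≤ B * A
  have key : h * h ≤ B * A := by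
    set μ : Measure ℝ := volume.restrict I with hμ
    haveI : IsFiniteMeasure μ := ⟨by
      rw [hμ, Measure.restrict_apply_univ, hIvol]; exact ENNReal.ofReal_lt_top⟩
    have hiw' : Integrable w μ := hiw
    have hiv' : Integrable (fun x => (w x)⁻¹) μ := hiv
    have int1 : Integrable (fun z : ℝ × ℝ => w z.1 * (w z.2)⁻¹) (μ.prod μ) :=
      hiw'.mul_prod hiv'
    have int2 : Integrable (fun z : ℝ × ℝ => (w z.1)⁻¹ * w z.2) (μ.prod μ) :=
      hiv'.mul_prod hiw'
    have e1 : ∫ z : ℝ × ℝ, w z.1 * (w z.2)⁻¹ ∂(μ.prod μ) = B * A :=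
      integral_prod_mul w (fun y => (w y)⁻¹)
    have e2 : ∫ z : ℝ × ℝ, (w z.1)⁻¹ * w z.2 ∂(μ.prod μ) = A * B :=
      integral_prod_mul (fun y => (w y)⁻¹) w
    have hmono : ∫ _ : ℝ × ℝ, (2:ℝ) ∂(μ.prod μ)
        ≤ ∫ z : ℝ × ℝ, (w z.1 * (w z.2)⁻¹ + (w z.1)⁻¹ * w z.2) ∂(μ.prod μ) := by
      refine integral_mono (integrable_const 2) (int1.add int2) ?_
      intro z
      exact two_le_add_inv (hw0 z.1) (hw0 z.2)
    rw [integral_add int1 int2, e1, e2, integral_const] at hmono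
    have hμuniv : ((μ.prod μ) Set.univ).toReal = h * h := by
      rw [← Set.univ_prod_univ, Measure.prod_prod, hμ, Measure.restrict_apply_univ, hIvol,
        ENNReal.toReal_mul, ENNReal.toReal_ofReal hpos.le]
    rw [measureReal_def, hμuniv, smul_eq_mul] at hmono
    nlinarith
  have hgv : gridAvg (fun x => (w x)⁻¹) α k x = h⁻¹ * A := rfl
  have hgw : gridAvg w α k x = h⁻¹ * B := rfl
  rw [hgv, hgw, mul_inv, inv_inv]
  rw [show h * A⁻¹ = h / A by ring, show h⁻¹ * B = B / h by ring,
    div_le_div_iff₀ hA0 hpos]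
  nlinarith
lemma intervalAvg_mono {f g : ℝ → ℝ} {a b : ℝ} (hfm : Measurable f)
    (hf0 : ∀ x, 0 ≤ f x) (hle : ∀ x, f x ≤ g x)
    (hgint : IntegrableOn g (Set.Ioc a b) volume) (hab : a < b) :
    intervalAvg f a b ≤ intervalAvg g a b := by
  have hfint : IntegrableOn f (Set.Ioc a b) volume := by
    refine Integrable.mono' hgint hfm.aestronglyMeasurable.restrict ?_
    exact Filter.Eventually.of_forall fun x => by
      rw [Real.norm_eq_abs, abs_of_nonneg (hf0 x)]; exact hle x
  exact mul_le_mul_of_nonneg_left (setIntegral_mono hfint hgint hle)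
    (inv_nonneg.2 (by linarith))

/-- there is an absolute constant `c` such that if `w ∈ A₂` with
`[w]_{A₂} ≤ W`, and `u` is the grid averaging of `w⁻¹` (grid offset `α`, scale `2^{-k}`)
and `v = (grid averaging of w, offset β, scale 2^{-k})⁻¹`, then
`[u,v]_{A₂}^{1/2}([u]_{A₂}^{1/2} + [v]_{A₂}^{1/2}) ≤ cW`. -/
theorem averaged_weights_joint_A2_bound :
    ∃ c : ℝ, 0 < c ∧
      ∀ w : ℝ → ℝ, Measurable w → (∀ x, 0 < w x) →
        LocallyIntegrable w volume →
        LocallyIntegrable (fun x => (w x)⁻¹) volume →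
        ∀ W : ℝ, 1 ≤ W →
        (∀ a b : ℝ, a < b →
          intervalAvg w a b * intervalAvg (fun x => (w x)⁻¹) a b ≤ W) →
        ∀ (k : ℤ) (α β : ℝ),
          Real.sqrt
              (jointA2const (gridAvg (fun x => (w x)⁻¹) α k)
                (fun x => (gridAvg w β k x)⁻¹)) *
            (Real.sqrt (A2const (gridAvg (fun x => (w x)⁻¹) α k)) +
              Real.sqrt (A2const (fun x => (gridAvg w β k x)⁻¹))) ≤ c * W := by
  refine ⟨18, by norm_num, ?_⟩
  intro w hwm hw0 hwloc hwiloc W hW hA2 k α β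
  set h : ℝ := (2:ℝ)^(-k) with hh
  have hpos := hpow k
  rw [← hh] at hpos
  have hw0' : ∀ x, 0 ≤ w x := fun x => (hw0 x).le
  have hwi0 : ∀ x, (0:ℝ) ≤ (w x)⁻¹ := fun x => (inv_pos.2 (hw0 x)).le
  have h9W : (0:ℝ) ≤ 9 * W := by linarith
  -- basic average bounds for an arbitrary interval
  have habK : ∀ a b : ℝ, a < b → a - h < b + h := fun a b hab => by linarith
  have bu : ∀ a b : ℝ, a < b → intervalAvg (gridAvg (fun x => (w x)⁻¹) α k) a b
      ≤ 3 * intervalAvg (fun x => (w x)⁻¹) (a - h) (b + h) :=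
    fun a b hab => avg_le hwi0 hwiloc α k hab
  have bvβ : ∀ a b : ℝ, a < b → intervalAvg (gridAvg w β k) a b
      ≤ 3 * intervalAvg w (a - h) (b + h) :=
    fun a b hab => avg_le hw0' hwloc β k hab
  have bwα : ∀ a b : ℝ, a < b → intervalAvg (gridAvg w α k) a b
      ≤ 3 * intervalAvg w (a - h) (b + h) :=
    fun a b hab => avg_le hw0' hwloc α k hab
  have bwiβ : ∀ a b : ℝ, a < b → intervalAvg (gridAvg (fun x => (w x)⁻¹) β k) a b
      ≤ 3 * intervalAvg (fun x => (w x)⁻¹) (a - h) (b + h) :=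
    fun a b hab => avg_le hwi0 hwiloc β k hab
  -- CS bounds for inverses
  have csα : ∀ x, (gridAvg (fun x => (w x)⁻¹) α k x)⁻¹ ≤ gridAvg w α k x :=
    cs_grid hw0 hwloc hwiloc α k
  have csβ : ∀ x, (gridAvg w β k x)⁻¹ ≤ gridAvg (fun x => (w x)⁻¹) β k x := by
    intro x
    have := cs_grid (w := fun x => (w x)⁻¹) (fun x => inv_pos.2 (hw0 x)) hwiloc
      (by simp only [inv_inv]; exact hwloc) β k x
    simpa only [inv_inv] using this
  -- nonnegativity of various averages
  have nn1 : ∀ a b : ℝ, a < b → 0 ≤ intervalAvg (gridAvg (fun x => (w x)⁻¹) α k) a b :=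
    fun a b hab => intervalAvg_nonneg (gridAvg_nonneg hwi0 α k) hab
  have nn2 : ∀ a b : ℝ, a < b → 0 ≤ intervalAvg (gridAvg w β k) a b :=
    fun a b hab => intervalAvg_nonneg (gridAvg_nonneg hw0' β k) hab
  have nnW : ∀ a b : ℝ, a < b → 0 ≤ intervalAvg w (a - h) (b + h) :=
    fun a b hab => intervalAvg_nonneg hw0' (habK a b hab)
  have nnWi : ∀ a b : ℝ, a < b → 0 ≤ intervalAvg (fun x => (w x)⁻¹) (a - h) (b + h) :=
    fun a b hab => intervalAvg_nonneg hwi0 (habK a b hab)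
  -- inverse-average bounds
  have invu : ∀ a b : ℝ, a < b →
      intervalAvg (fun y => (gridAvg (fun x => (w x)⁻¹) α k y)⁻¹) a b
        ≤ intervalAvg (gridAvg w α k) a b := by
    intro a b hab
    refine intervalAvg_mono ((gridAvg_measurable α k).inv)
      (fun x => inv_nonneg.2 (gridAvg_nonneg hwi0 α k x)) csα
      ((gridAvg_integrableOn hw0' hwloc α k a b).mono_set Set.Ioc_subset_Icc_self) hab
  have invv : ∀ a b : ℝ, a < b →
      intervalAvg (fun y => (gridAvg w β k y)⁻¹) a b
        ≤ intervalAvg (gridAvg (fun x => (w x)⁻¹) β k) a b := by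
    intro a b hab
    refine intervalAvg_mono ((gridAvg_measurable β k).inv)
      (fun x => inv_nonneg.2 (gridAvg_nonneg hw0' β k x)) csβ
      ((gridAvg_integrableOn hwi0 hwiloc β k a b).mono_set Set.Ioc_subset_Icc_self) hab
  -- the three 9W bounds
  have bound_joint : jointA2const (gridAvg (fun x => (w x)⁻¹) α k)
      (fun x => (gridAvg w β k x)⁻¹) ≤ 9 * W := by
    refine Real.sSup_le ?_ h9W
    rintro c ⟨a, b, hab, rfl⟩
    simp only [inv_inv]
    have t1 := bu a b hab
    have t2 := bvβ a b hab
    have hW' := hA2 (a - h) (b + h) (habK a b hab)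
    nlinarith [nn1 a b hab, nn2 a b hab, nnW a b hab, nnWi a b hab]
  have bound_u : A2const (gridAvg (fun x => (w x)⁻¹) α k) ≤ 9 * W := by
    refine Real.sSup_le ?_ h9W
    rintro c ⟨a, b, hab, rfl⟩
    have t1 := bu a b hab
    have t2 := (invu a b hab).trans (bwα a b hab)
    have hW' := hA2 (a - h) (b + h) (habK a b hab)
    have nn3 : 0 ≤ intervalAvg (fun y => (gridAvg (fun x => (w x)⁻¹) α k y)⁻¹) a b :=
      intervalAvg_nonneg (fun x => inv_nonneg.2 (gridAvg_nonneg hwi0 α k x)) hab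
    nlinarith [nn1 a b hab, nnW a b hab, nnWi a b hab]
  have bound_v : A2const (fun x => (gridAvg w β k x)⁻¹) ≤ 9 * W := by
    refine Real.sSup_le ?_ h9W
    rintro c ⟨a, b, hab, rfl⟩
    simp only [inv_inv]
    have t1 := (invv a b hab).trans (bwiβ a b hab)
    have t2 := bvβ a b hab
    have hW' := hA2 (a - h) (b + h) (habK a b hab)
    have nn3 : 0 ≤ intervalAvg (fun y => (gridAvg w β k y)⁻¹) a b :=
      intervalAvg_nonneg (fun x => inv_nonneg.2 (gridAvg_nonneg hw0' β k x)) hab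
    nlinarith [nn2 a b hab, nnW a b hab, nnWi a b hab]
  -- conclude
  have s1 := Real.sqrt_le_sqrt bound_joint
  have s2 := Real.sqrt_le_sqrt bound_u
  have s3 := Real.sqrt_le_sqrt bound_v
  have s9 : Real.sqrt (9 * W) * Real.sqrt (9 * W) = 9 * W := Real.mul_self_sqrt h9W
  calc Real.sqrt (jointA2const (gridAvg (fun x => (w x)⁻¹) α k)
          (fun x => (gridAvg w β k x)⁻¹)) *
        (Real.sqrt (A2const (gridAvg (fun x => (w x)⁻¹) α k)) +
          Real.sqrt (A2const (fun x => (gridAvg w β k x)⁻¹)))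
      ≤ Real.sqrt (9 * W) * (Real.sqrt (9 * W) + Real.sqrt (9 * W)) := by
        refine mul_le_mul s1 (add_le_add s2 s3) (by positivity) (Real.sqrt_nonneg _)
    _ = 18 * W := by
        rw [show Real.sqrt (9 * W) * (Real.sqrt (9 * W) + Real.sqrt (9 * W))
          = 2 * (Real.sqrt (9 * W) * Real.sqrt (9 * W)) by ring, s9]
        ring
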